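/- Let ℱ be a free filter on ℕ, F ∈ ℱ with ℕ \ F infinite, and λ an infinite cardinal. For each subset κ ⊆ λ, the set I_κ = (ℕ_{ℱ,max} × {0}) ∪ ((ℕ \ F) × κ) is an open-and-closed ideal of E = (ℕ_{ℱ,max} × {0}) ∪ ((ℕ \ F) × λ), and the Rees quotient E/I_κ with the quotient topology is a discrete topological semilattice that is not 𝓗-complete. -/

import Mathlib

open Topology Set

/-- A filter is free if the intersection of all its members is empty. -/
def FreeF (F : Filter ℕ) : Prop := ⋂₀ F.sets = ∅

/-- The topology on ℕ_ℱ = ℕ ∪ {ℱ} (modelled as `Option ℕ`, with `none` the point ℱ):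
all points of ℕ are isolated, and the sets F ∪ {ℱ}, F ∈ ℱ, form a neighbourhood base at ℱ. -/
def nfTop (F : Filter ℕ) : TopologicalSpace (Option ℕ) where
  IsOpen U := none ∈ U → {n : ℕ | some n ∈ U} ∈ F
  isOpen_univ := fun _ => by simp
  isOpen_inter := fun U V hU hV h => Filter.inter_mem (hU h.1) (hV h.2)
  isOpen_sUnion := fun S hS h => by
    obtain ⟨U, hUS, hnU⟩ := h
    exact Filter.mem_of_superset (hS U hUS hnU) fun n hn => ⟨U, hUS, hn⟩

/-- min on ℕ extended to ℕ_ℱ by min(n,ℱ) = n, min(ℱ,ℱ) = ℱ. -/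
def minOp : Option ℕ → Option ℕ → Option ℕ
  | none, y => y
  | some a, none => some a
  | some a, some b => some (min a b)

/-- max on ℕ extended to ℕ_ℱ by max(n,ℱ) = ℱ = max(ℱ,ℱ). -/
def maxOp : Option ℕ → Option ℕ → Option ℕ
  | none, _ => none
  | _, none => none
  | some a, some b => some (max a b)

/-- `X` with operation `op` is a (Hausdorff) topological semilattice. -/
structure IsTopSemilattice (X : Type*) [TopologicalSpace X] (op : X → X → X) : Prop where
  t2 : T2Space X
  comm : ∀ a b, op a b = op b a
  idem : ∀ a, op a a = a
  assoc : ∀ a b c, op (op a b) c = op a (op b c)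
  cont : Continuous fun p : X × X => op p.1 p.2

/-- 𝓗-completeness: the image under any topological embedding which is a semilattice
homomorphism into a Hausdorff topological semilattice is closed. -/
def HComplete (X : Type*) [TopologicalSpace X] (op : X → X → X) : Prop :=
  ∀ (Y : Type*) [TopologicalSpace Y] (opY : Y → Y → Y), IsTopSemilattice Y opY →
    ∀ f : X → Y, Topology.IsEmbedding f →
      (∀ a b, f (op a b) = opY (f a) (f b)) → IsClosed (Set.range f)

/-- 𝓐𝓗-completeness: the image under any continuous semilattice homomorphism
into a Hausdorff topological semilattice is closed. -/
def AHComplete (X : Type*) [TopologicalSpace X] (op : X → X → X) : Prop :=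
  ∀ (Y : Type*) [TopologicalSpace Y] (opY : Y → Y → Y), IsTopSemilattice Y opY →
    ∀ f : X → Y, Continuous f →
      (∀ a b, f (op a b) = opY (f a) (f b)) → IsClosed (Set.range f)

-- The semilattice operation of E_λ = {0} ∪ λ (modelled as `Option L`, `none` the zero):
-- x·y = x if x = y and x·y = 0 otherwise.
open Classical in
noncomputable def eOp {L : Type*} (x y : Option L) : Option L := if x = y then x else none

/-- The product topology on ℕ_{ℱ,max} × E_λ (E_λ discrete). -/
def prodTopL (F : Filter ℕ) (L : Type*) : TopologicalSpace (Option ℕ × Option L) :=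
  @instTopologicalSpaceProd _ _ (nfTop F) ⊥

/-- The coordinatewise operation on ℕ_{ℱ,max} × E_λ. -/
noncomputable def pOpL {L : Type*} (p q : Option ℕ × Option L) : Option ℕ × Option L :=
  (maxOp p.1 q.1, eOp p.2 q.2)

/-- The subset E = (ℕ_{ℱ,max} × {0}) ∪ ((ℕ \ F) × λ) of ℕ_{ℱ,max} × E_λ. -/
def EsetL (Fs : Set ℕ) (L : Type*) : Set (Option ℕ × Option L) :=
  (Set.univ ×ˢ {none}) ∪ ((some '' Fsᶜ) ×ˢ (some '' Set.univ))

/-- The ideal I_κ = (ℕ_{ℱ,max} × {0}) ∪ ((ℕ \ F) × κ) for κ ⊆ λ. -/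
def IsetL (Fs : Set ℕ) {L : Type*} (κ : Set L) : Set (Option ℕ × Option L) :=
  (Set.univ ×ˢ {none}) ∪ ((some '' Fsᶜ) ×ˢ (some '' κ))

/-- The subspace topology on E ⊆ ℕ_{ℱ,max} × E_λ. -/
def subTopL (F : Filter ℕ) (Fs : Set ℕ) (L : Type*) : TopologicalSpace (EsetL Fs L) :=
  @instTopologicalSpaceSubtype _ _ (prodTopL F L)

/-- The Rees congruence on E identifying all points of the ideal I_κ. -/
def reesSetoidL (Fs : Set ℕ) {L : Type*} (κ : Set L) : Setoid (EsetL Fs L) where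
  r a b := a = b ∨ ((a : Option ℕ × Option L) ∈ IsetL Fs κ ∧
    (b : Option ℕ × Option L) ∈ IsetL Fs κ)
  iseqv := by
    refine ⟨fun _ => Or.inl rfl, ?_, ?_⟩
    · rintro a b (rfl | h)
      · exact Or.inl rfl
      · exact Or.inr ⟨h.2, h.1⟩
    · rintro a b c (rfl | h1) h2
      · exact h2
      · rcases h2 with rfl | h2
        · exact Or.inr h1
        · exact Or.inr ⟨h1.1, h2.2⟩

/-- The quotient topology on the Rees quotient E/I_κ. -/
def qTopL (F : Filter ℕ) (Fs : Set ℕ) {L : Type*} (κ : Set L) :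
    TopologicalSpace (Quotient (reesSetoidL Fs κ)) :=
  (subTopL F Fs L).coinduced (Quotient.mk (reesSetoidL Fs κ))


section AuxOps

variable {L : Type*}

lemma maxOp_none_left (y : Option ℕ) : maxOp none y = none := by cases y <;> rfl

lemma maxOp_none_right (a : Option ℕ) : maxOp a none = none := by cases a <;> rfl

lemma maxOp_comm (a b : Option ℕ) : maxOp a b = maxOp b a := by
  cases a <;> cases b <;> simp [maxOp, Nat.max_comm]

lemma maxOp_assoc (a b c : Option ℕ) : maxOp (maxOp a b) c = maxOp a (maxOp b c) := by
  cases a <;> cases b <;> cases c <;> simp [maxOp, Nat.max_assoc]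

lemma maxOp_idem (a : Option ℕ) : maxOp a a = a := by cases a <;> simp [maxOp]

lemma eOp_self (x : Option L) : eOp x x = x := by rw [eOp, if_pos rfl]

lemma eOp_none_left (y : Option L) : eOp none y = none := by
  by_cases h : (none : Option L) = y
  · rw [eOp, if_pos h]
  · rw [eOp, if_neg h]

lemma eOp_none_right (x : Option L) : eOp x none = none := by
  by_cases h : x = (none : Option L)
  · rw [eOp, if_pos h, h]
  · rw [eOp, if_neg h]

lemma eOp_comm (x y : Option L) : eOp x y = eOp y x := by
  by_cases h : x = y
  · subst h; rfl
  · rw [eOp, eOp, if_neg h, if_neg (Ne.symm h)]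

lemma eOp_assoc (x y z : Option L) : eOp (eOp x y) z = eOp x (eOp y z) := by
  by_cases hxy : x = y
  · subst hxy
    by_cases hxz : x = z
    · subst hxz; simp [eOp_self]
    · have h1 : eOp x z = none := by rw [eOp, if_neg hxz]
      rw [eOp_self, h1, eOp_none_right]
  · have hL : eOp x y = none := by rw [eOp, if_neg hxy]
    rw [hL, eOp_none_left]
    by_cases hyz : y = z
    · subst hyz
      rw [eOp_self, hL]
    · have hR : eOp y z = none := by rw [eOp, if_neg hyz]
      rw [hR, eOp_none_right]

lemma pOpL_comm (p q : Option ℕ × Option L) : pOpL p q = pOpL q p :=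
  Prod.ext (maxOp_comm _ _) (eOp_comm _ _)

lemma pOpL_assoc (p q r : Option ℕ × Option L) :
    pOpL (pOpL p q) r = pOpL p (pOpL q r) :=
  Prod.ext (maxOp_assoc _ _ _) (eOp_assoc _ _ _)

lemma pOpL_self (p : Option ℕ × Option L) : pOpL p p = p :=
  Prod.ext (maxOp_idem _) (eOp_self _)

open Classical in
noncomputable def nuL {L : Type*} (p : Option ℕ × Option L) : Option ℕ × Option L :=
  if p.2 = none then (none, none) else p

noncomputable def yOpL {L : Type*} (p q : Option ℕ × Option L) : Option ℕ × Option L :=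
  nuL (pOpL p q)

lemma nuL_none {p : Option ℕ × Option L} (h : p.2 = none) : nuL p = (none, none) := by
  rw [nuL, if_pos h]

lemma nuL_of_ne {p : Option ℕ × Option L} (h : p.2 ≠ none) : nuL p = p := by
  rw [nuL, if_neg h]

lemma yOpL_comm (p q : Option ℕ × Option L) : yOpL p q = yOpL q p :=
  congrArg nuL (pOpL_comm p q)

lemma yOpL_self (p : Option ℕ × Option L) : yOpL p p = nuL p :=
  congrArg nuL (pOpL_self p)

lemma nuL_pOpL_left (p q : Option ℕ × Option L) :
    nuL (pOpL (nuL p) q) = nuL (pOpL p q) := by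
  by_cases h : p.2 = none
  · rw [nuL_none h]
    have h1 : (pOpL ((none, none) : Option ℕ × Option L) q).2 = none := eOp_none_left q.2
    have h2 : (pOpL p q).2 = none := by
      show eOp p.2 q.2 = none
      rw [h]; exact eOp_none_left q.2
    rw [nuL_none h1, nuL_none h2]
  · rw [nuL_of_ne h]

lemma nuL_pOpL_right (p q : Option ℕ × Option L) :
    nuL (pOpL p (nuL q)) = nuL (pOpL p q) := by
  rw [pOpL_comm p (nuL q), nuL_pOpL_left, pOpL_comm q p]

lemma yOpL_assoc (p q r : Option ℕ × Option L) :
    yOpL (yOpL p q) r = yOpL p (yOpL q r) := by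
  show nuL (pOpL (nuL (pOpL p q)) r) = nuL (pOpL p (nuL (pOpL q r)))
  rw [nuL_pOpL_left, nuL_pOpL_right, pOpL_assoc]

lemma nfTop_isOpen_iff (G : Filter ℕ) (U : Set (Option ℕ)) :
    @IsOpen _ (nfTop G) U ↔ (none ∈ U → {n : ℕ | some n ∈ U} ∈ G) := Iff.rfl

end AuxOps

/-- for each proper subset κ ⊂ λ, I_κ = (ℕ_{ℱ,max} × {0}) ∪ ((ℕ \ F) × κ)
is an open-and-closed ideal of E = (ℕ_{ℱ,max} × {0}) ∪ ((ℕ \ F) × λ), and the Rees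
quotient E/I_κ with the quotient topology is a discrete topological semilattice
which is not 𝓗-complete. -/
theorem IsetL_clopen_ideal_quotient_not_hComplete (F : Filter ℕ) (hF : FreeF F)
    (Fs : Set ℕ) (hFs : Fs ∈ F) (hinf : Fsᶜ.Infinite) (L : Type) [Infinite L]
    (κ : Set L) (hκ : κ ≠ Set.univ)
    (hsub : ∀ p ∈ EsetL Fs L, ∀ q ∈ EsetL Fs L, pOpL p q ∈ EsetL Fs L) :
    (∀ p ∈ EsetL Fs L, ∀ q ∈ IsetL Fs κ, pOpL p q ∈ IsetL Fs κ) ∧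
    @IsClopen (EsetL Fs L) (subTopL F Fs L)
      {x : EsetL Fs L | (x : Option ℕ × Option L) ∈ IsetL Fs κ} ∧
    ∃ opQ : Quotient (reesSetoidL Fs κ) → Quotient (reesSetoidL Fs κ) →
        Quotient (reesSetoidL Fs κ),
      (∀ a b : EsetL Fs L,
        opQ (Quotient.mk (reesSetoidL Fs κ) a) (Quotient.mk (reesSetoidL Fs κ) b) =
          Quotient.mk (reesSetoidL Fs κ) ⟨pOpL a.1 b.1, hsub a.1 a.2 b.1 b.2⟩) ∧
      @DiscreteTopology _ (qTopL F Fs κ) ∧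
      @IsTopSemilattice _ (qTopL F Fs κ) opQ ∧
      ¬ @HComplete _ (qTopL F Fs κ) opQ := by
  classical
  obtain ⟨k₀, hk₀⟩ : ∃ k, k ∉ κ := Set.ne_univ_iff_exists_notMem κ |>.mp hκ
  -- Part 1: ideal property
  have hideal : ∀ p ∈ EsetL Fs L, ∀ q ∈ IsetL Fs κ, pOpL p q ∈ IsetL Fs κ := by
    rintro p hp q (⟨-, hq2⟩ | ⟨⟨n, hn, hqn⟩, ⟨k, hk, hqk⟩⟩)
    · refine Or.inl ⟨trivial, show eOp p.2 q.2 = none from ?_⟩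
      have h2 : q.2 = none := hq2
      rw [h2]; exact eOp_none_right _
    · by_cases hpq : p.2 = q.2
      · rcases hp with ⟨-, hp2⟩ | ⟨⟨m, hm, hpm⟩, -⟩
        · exfalso
          have hp2' : p.2 = none := hp2
          rw [hpq] at hp2'
          exact Option.some_ne_none k (hqk.trans hp2')
        · refine Or.inr ⟨⟨max m n, ?_, ?_⟩, ⟨k, hk, ?_⟩⟩
          · rcases le_total m n with h | h
            · rw [max_eq_right h]; exact hn
            · rw [max_eq_left h]; exact hm
          · show some (max m n) = maxOp p.1 q.1
            rw [← hpm, ← hqn]; rfl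
          · show some k = eOp p.2 q.2
            rw [eOp, if_pos hpq, hpq, ← hqk]
      · refine Or.inl ⟨trivial, show eOp p.2 q.2 = none from ?_⟩
        rw [eOp, if_neg hpq]
  -- normal form of elements of E outside the ideal
  have hform : ∀ a : EsetL Fs L, (a : Option ℕ × Option L) ∉ IsetL Fs κ →
      ∃ n, n ∈ Fsᶜ ∧ ∃ k, k ∉ κ ∧ (a : Option ℕ × Option L) = (some n, some k) := by
    intro a ha
    rcases a.2 with ⟨-, h2⟩ | ⟨⟨n, hn, h1⟩, ⟨k, -, h2⟩⟩
    · exact absurd (Or.inl ⟨trivial, h2⟩) ha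
    · refine ⟨n, hn, k, fun hk => ha (Or.inr ⟨⟨n, hn, h1⟩, ⟨k, hk, h2⟩⟩), ?_⟩
      exact Prod.ext h1.symm h2.symm
  -- the ideal is open in the ambient product
  have hIopen : @IsOpen _ (prodTopL F L) (IsetL Fs κ) := by
    letI : TopologicalSpace (Option ℕ) := nfTop F
    letI : TopologicalSpace (Option L) := ⊥
    haveI : DiscreteTopology (Option L) := ⟨rfl⟩
    show IsOpen (IsetL Fs κ)
    exact IsOpen.union (IsOpen.prod isOpen_univ (isOpen_discrete _))
      (IsOpen.prod ((nfTop_isOpen_iff F _).mpr (fun h => absurd h (by simp))) (isOpen_discrete _))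
  have hsingall : ∀ (n : ℕ) (k : Option L),
      @IsOpen _ (prodTopL F L) ({(some n, k)} : Set (Option ℕ × Option L)) := by
    intro n k
    letI : TopologicalSpace (Option ℕ) := nfTop F
    letI : TopologicalSpace (Option L) := ⊥
    haveI : DiscreteTopology (Option L) := ⟨rfl⟩
    show IsOpen ({(some n, k)} : Set (Option ℕ × Option L))
    rw [← Set.singleton_prod_singleton]
    exact IsOpen.prod ((nfTop_isOpen_iff F _).mpr (fun h => absurd h (by simp)))
      (isOpen_discrete _)
  -- discreteness of the quotient
  have hdiscQ : @DiscreteTopology _ (qTopL F Fs κ) := by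
    letI : TopologicalSpace (Option ℕ) := nfTop F
    letI : TopologicalSpace (Option L) := ⊥
    haveI : DiscreteTopology (Option L) := ⟨rfl⟩
    letI : TopologicalSpace (Quotient (reesSetoidL Fs κ)) := qTopL F Fs κ
    refine discreteTopology_iff_isOpen_singleton.mpr fun x => ?_
    obtain ⟨a, rfl⟩ := Quotient.exists_rep x
    have key : @IsOpen _ (subTopL F Fs L)
        (Quotient.mk (reesSetoidL Fs κ) ⁻¹' {Quotient.mk (reesSetoidL Fs κ) a}) := by
      by_cases ha : (a : Option ℕ × Option L) ∈ IsetL Fs κ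
      · have he : Quotient.mk (reesSetoidL Fs κ) ⁻¹' {Quotient.mk (reesSetoidL Fs κ) a}
            = Subtype.val ⁻¹' (IsetL Fs κ) := by
          ext b
          constructor
          · intro hb
            have hb' : b = a ∨ ((b : Option ℕ × Option L) ∈ IsetL Fs κ ∧
                (a : Option ℕ × Option L) ∈ IsetL Fs κ) := Quotient.exact hb
            rcases hb' with rfl | ⟨h1, -⟩
            · exact ha
            · exact h1
          · intro hb
            exact Quotient.sound (Or.inr ⟨hb, ha⟩)
        rw [he]
        exact hIopen.preimage continuous_subtype_val
      · obtain ⟨n, hn, k, hk, hak⟩ := hform a ha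
        have he : Quotient.mk (reesSetoidL Fs κ) ⁻¹' {Quotient.mk (reesSetoidL Fs κ) a}
            = Subtype.val ⁻¹' ({((some n, some k) : Option ℕ × Option L)}) := by
          ext b
          constructor
          · intro hb
            have hb' : b = a ∨ ((b : Option ℕ × Option L) ∈ IsetL Fs κ ∧
                (a : Option ℕ × Option L) ∈ IsetL Fs κ) := Quotient.exact hb
            rcases hb' with rfl | ⟨-, h2⟩
            · exact hak
            · exact absurd h2 ha
          · intro hb
            have hb' : (b : Option ℕ × Option L) = (some n, some k) := hb
            exact Quotient.sound (Or.inl (Subtype.ext (hb'.trans hak.symm)))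
        rw [he]
        exact (hsingall n (some k)).preimage continuous_subtype_val
    exact isOpen_coinduced.mpr key
  -- the operation on E and on the quotient
  let opE : EsetL Fs L → EsetL Fs L → EsetL Fs L :=
    fun a b => ⟨pOpL a.1 b.1, hsub a.1 a.2 b.1 b.2⟩
  have hIopR : ∀ a b : EsetL Fs L, (b : Option ℕ × Option L) ∈ IsetL Fs κ →
      ((opE a b : EsetL Fs L) : Option ℕ × Option L) ∈ IsetL Fs κ :=
    fun a b hb => hideal a.1 a.2 b.1 hb
  have hIopL : ∀ a b : EsetL Fs L, (a : Option ℕ × Option L) ∈ IsetL Fs κ →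
      ((opE a b : EsetL Fs L) : Option ℕ × Option L) ∈ IsetL Fs κ := by
    intro a b ha
    show pOpL a.1 b.1 ∈ IsetL Fs κ
    rw [pOpL_comm]
    exact hideal b.1 b.2 a.1 ha
  have hwd : ∀ a₁ b₁ a₂ b₂ : EsetL Fs L, (reesSetoidL Fs κ).r a₁ a₂ → (reesSetoidL Fs κ).r b₁ b₂ →
      Quotient.mk (reesSetoidL Fs κ) (opE a₁ b₁) = Quotient.mk (reesSetoidL Fs κ) (opE a₂ b₂) := by
    intro a₁ b₁ a₂ b₂ ha hb
    have ha' : a₁ = a₂ ∨ ((a₁ : Option ℕ × Option L) ∈ IsetL Fs κ ∧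
        (a₂ : Option ℕ × Option L) ∈ IsetL Fs κ) := ha
    have hb' : b₁ = b₂ ∨ ((b₁ : Option ℕ × Option L) ∈ IsetL Fs κ ∧
        (b₂ : Option ℕ × Option L) ∈ IsetL Fs κ) := hb
    rcases ha' with rfl | ⟨h1, h2⟩
    · rcases hb' with rfl | ⟨h1, h2⟩
      · rfl
      · exact Quotient.sound (Or.inr ⟨hIopR _ _ h1, hIopR _ _ h2⟩)
    · exact Quotient.sound (Or.inr ⟨hIopL _ _ h1, hIopL _ _ h2⟩)
  let opQ : Quotient (reesSetoidL Fs κ) → Quotient (reesSetoidL Fs κ) →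
      Quotient (reesSetoidL Fs κ) :=
    fun x y => Quotient.liftOn₂ x y (fun a b => Quotient.mk (reesSetoidL Fs κ) (opE a b)) hwd
  refine ⟨hideal, ⟨?_, ?_⟩, opQ, fun a b => rfl, hdiscQ, ?_, ?_⟩
  -- ideal closed in E
  · letI : TopologicalSpace (Option ℕ) := nfTop F
    letI : TopologicalSpace (Option L) := ⊥
    haveI : DiscreteTopology (Option L) := ⟨rfl⟩
    show IsClosed {x : EsetL Fs L | (x : Option ℕ × Option L) ∈ IsetL Fs κ}
    rw [← isOpen_compl_iff]
    have he : {x : EsetL Fs L | (x : Option ℕ × Option L) ∈ IsetL Fs κ}ᶜ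
        = Subtype.val ⁻¹' ((some '' Fsᶜ) ×ˢ (some '' κᶜ)) := by
      ext a
      simp only [Set.mem_compl_iff, Set.mem_setOf_eq, Set.mem_preimage]
      constructor
      · intro ha
        obtain ⟨n, hn, k, hk, hak⟩ := hform a ha
        rw [hak]
        exact ⟨⟨n, hn, rfl⟩, ⟨k, hk, rfl⟩⟩
      · rintro ⟨⟨n, hn, h1⟩, ⟨k, hk, h2⟩⟩ hI
        rcases hI with ⟨-, hI2⟩ | ⟨-, ⟨k', hk', hI2⟩⟩
        · have hI2' : (a : Option ℕ × Option L).2 = none := hI2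
          rw [← h2] at hI2'
          exact Option.some_ne_none k hI2'
        · have : k' = k := Option.some_inj.mp (hI2.trans h2.symm)
          exact hk (this ▸ hk')
    rw [he]
    exact (IsOpen.prod ((nfTop_isOpen_iff F _).mpr (fun h => absurd h (by simp)))
      (isOpen_discrete _)).preimage continuous_subtype_val
  -- ideal open in E
  · letI : TopologicalSpace (Option ℕ) := nfTop F
    letI : TopologicalSpace (Option L) := ⊥
    haveI : DiscreteTopology (Option L) := ⟨rfl⟩
    show IsOpen {x : EsetL Fs L | (x : Option ℕ × Option L) ∈ IsetL Fs κ}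
    exact hIopen.preimage continuous_subtype_val
  -- topological semilattice structure on the quotient
  · letI : TopologicalSpace (Quotient (reesSetoidL Fs κ)) := qTopL F Fs κ
    haveI := hdiscQ
    refine ⟨inferInstance, ?_, ?_, ?_, continuous_of_discreteTopology⟩
    · intro x y
      refine Quotient.inductionOn₂ x y fun a b => ?_
      exact congrArg (Quotient.mk (reesSetoidL Fs κ)) (Subtype.ext (pOpL_comm a.1 b.1))
    · intro x
      refine Quotient.inductionOn x fun a => ?_
      exact congrArg (Quotient.mk (reesSetoidL Fs κ)) (Subtype.ext (pOpL_self a.1))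
    · intro x y z
      refine Quotient.inductionOn₃ x y z fun a b c => ?_
      exact congrArg (Quotient.mk (reesSetoidL Fs κ)) (Subtype.ext (pOpL_assoc a.1 b.1 c.1))
  -- not H-complete
  · intro hcomp
    letI tQ : TopologicalSpace (Quotient (reesSetoidL Fs κ)) := qTopL F Fs κ
    haveI := hdiscQ
    letI : TopologicalSpace (Option ℕ) := nfTop Filter.atTop
    letI : TopologicalSpace (Option L) := ⊥
    haveI : DiscreteTopology (Option L) := ⟨rfl⟩
    -- the bigger semilattice Y
    let Ys : Set (Option ℕ × Option L) :=
      insert (none, none) (insert (none, some k₀) ((some '' Fsᶜ) ×ˢ (some '' κᶜ)))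
    have hYmem : ∀ p : Option ℕ × Option L, p ∈ Ys ↔
        p = (none, none) ∨ p = (none, some k₀) ∨
        ∃ n, n ∈ Fsᶜ ∧ ∃ k, k ∉ κ ∧ p = (some n, some k) := by
      intro p
      constructor
      · rintro (h | h | ⟨⟨n, hn, h1⟩, ⟨k, hk, h2⟩⟩)
        · exact Or.inl h
        · exact Or.inr (Or.inl h)
        · exact Or.inr (Or.inr ⟨n, hn, k, hk, Prod.ext h1.symm h2.symm⟩)
      · rintro (h | h | ⟨n, hn, k, hk, rfl⟩)
        · exact Or.inl h
        · exact Or.inr (Or.inl h)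
        · exact Or.inr (Or.inr ⟨⟨n, hn, rfl⟩, ⟨k, hk, rfl⟩⟩)
    have hzY : ((none, none) : Option ℕ × Option L) ∈ Ys := Set.mem_insert _ _
    have hinfY : ((none, some k₀) : Option ℕ × Option L) ∈ Ys :=
      Set.mem_insert_of_mem _ (Set.mem_insert _ _)
    have hzL : ∀ q : Option ℕ × Option L, yOpL (none, none) q = (none, none) := by
      intro q
      show nuL (pOpL (none, none) q) = (none, none)
      exact nuL_none (eOp_none_left q.2)
    have hzR : ∀ q : Option ℕ × Option L, yOpL q (none, none) = (none, none) := by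
      intro q
      show nuL (pOpL q (none, none)) = (none, none)
      exact nuL_none (eOp_none_right q.2)
    have hinfmul : ∀ m k', m ∈ Fsᶜ → k' ∉ κ →
        yOpL (none, some k₀) (some m, some k') ∈ Ys := by
      intro m k' hm hk'
      by_cases hkk : (some k₀ : Option L) = some k'
      · have h1 : pOpL ((none, some k₀) : Option ℕ × Option L) (some m, some k')
            = (none, some k₀) := Prod.ext (by show maxOp none (some m) = none; exact maxOp_none_left _) (by show eOp _ _ = some k₀; rw [eOp, if_pos hkk])
        show nuL (pOpL _ _) ∈ Ys
        rw [h1, nuL_of_ne (by simp)]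
        exact hinfY
      · have h1 : pOpL ((none, some k₀) : Option ℕ × Option L) (some m, some k')
            = (none, none) := Prod.ext (by show maxOp none (some m) = none; exact maxOp_none_left _) (by show eOp _ _ = none; rw [eOp, if_neg hkk])
        show nuL (pOpL _ _) ∈ Ys
        rw [h1, nuL_none rfl]
        exact hzY
    have hYc : ∀ p ∈ Ys, ∀ q ∈ Ys, yOpL p q ∈ Ys := by
      intro p hp q hq
      rcases (hYmem p).mp hp with rfl | rfl | ⟨n, hn, k, hk, rfl⟩
      · rw [hzL]; exact hzY
      · rcases (hYmem q).mp hq with rfl | rfl | ⟨m, hm, k', hk', rfl⟩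
        · rw [hzR]; exact hzY
        · have h1 : pOpL ((none, some k₀) : Option ℕ × Option L) (none, some k₀)
              = (none, some k₀) := Prod.ext rfl (eOp_self _)
          show nuL (pOpL _ _) ∈ Ys
          rw [h1, nuL_of_ne (by simp)]
          exact hinfY
        · exact hinfmul m k' hm hk'
      · rcases (hYmem q).mp hq with rfl | rfl | ⟨m, hm, k', hk', rfl⟩
        · rw [hzR]; exact hzY
        · rw [yOpL_comm]; exact hinfmul n k hn hk
        · by_cases hkk : (some k : Option L) = some k'
          · have h1 : pOpL ((some n, some k) : Option ℕ × Option L) (some m, some k')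
                = (some (max n m), some k) :=
              Prod.ext rfl (by show eOp _ _ = some k; rw [eOp, if_pos hkk])
            show nuL (pOpL _ _) ∈ Ys
            rw [h1, nuL_of_ne (by simp)]
            refine (hYmem _).mpr (Or.inr (Or.inr ⟨max n m, ?_, k, hk, rfl⟩))
            rcases le_total n m with h | h
            · rw [max_eq_right h]; exact hm
            · rw [max_eq_left h]; exact hn
          · have h1 : pOpL ((some n, some k) : Option ℕ × Option L) (some m, some k')
                = (some (max n m), none) :=
              Prod.ext rfl (by show eOp _ _ = none; rw [eOp, if_neg hkk])
            show nuL (pOpL _ _) ∈ Ys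
            rw [h1, nuL_none rfl]
            exact hzY
    -- Hausdorffness of the ambient space
    have hcof : ∀ m : ℕ, {n : ℕ | some n ∈ ({some m}ᶜ : Set (Option ℕ))} ∈
        (Filter.atTop : Filter ℕ) := by
      intro m
      refine Filter.mem_of_superset (Filter.Ici_mem_atTop (m + 1)) (fun b hb => ?_)
      have : b ≠ m := by
        have : m + 1 ≤ b := hb
        omega
      simpa using this
    haveI hT2n : T2Space (Option ℕ) := by
      constructor
      intro x y hxy
      rcases x with _ | n
      · rcases y with _ | m
        · exact absurd rfl hxy
        · refine ⟨{some m}ᶜ, {some m}, ?_, ?_, ?_, rfl, disjoint_compl_left⟩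
          · exact (nfTop_isOpen_iff _ _).mpr (fun _ => hcof m)
          · exact (nfTop_isOpen_iff _ _).mpr (fun h => absurd h (by simp))
          · simp
      · refine ⟨{some n}, {some n}ᶜ, ?_, ?_, rfl, ?_, disjoint_compl_right⟩
        · exact (nfTop_isOpen_iff _ _).mpr (fun h => absurd h (by simp))
        · exact (nfTop_isOpen_iff _ _).mpr (fun _ => hcof n)
        · exact fun h => hxy (Eq.symm h)
    -- continuity of yOpL
    have hW : ∀ m₀ : ℕ, IsOpen (insert none (some '' Set.Ici m₀) : Set (Option ℕ)) := by
      intro m₀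
      refine (nfTop_isOpen_iff _ _).mpr (fun _ => ?_)
      refine Filter.mem_of_superset (Filter.Ici_mem_atTop m₀) (fun b hb => ?_)
      show some b ∈ insert none (some '' Set.Ici m₀)
      exact Set.mem_insert_iff.mpr (Or.inr ⟨b, hb, rfl⟩)
    have hWprop : ∀ (m₀ : ℕ) (x : Option ℕ), x ∈ insert none (some '' Set.Ici m₀) →
        x = none ∨ ∃ b, m₀ ≤ b ∧ x = some b := by
      rintro m₀ x (rfl | ⟨b, hb, rfl⟩)
      · exact Or.inl rfl
      · exact Or.inr ⟨b, hb, rfl⟩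
    have hmax : ∀ (m₀ : ℕ) (x y : Option ℕ), (y = none ∨ ∃ b, m₀ ≤ b ∧ y = some b) →
        maxOp x y = none ∨ ∃ b, m₀ ≤ b ∧ maxOp x y = some b := by
      intro m₀ x y hy
      rcases hy with rfl | ⟨b, hb, rfl⟩
      · exact Or.inl (maxOp_none_right x)
      · rcases x with _ | a
        · exact Or.inl (maxOp_none_left _)
        · exact Or.inr ⟨max a b, le_trans hb (le_max_right a b), rfl⟩
    have hcontAmb : Continuous
        (fun pq : (Option ℕ × Option L) × (Option ℕ × Option L) => yOpL pq.1 pq.2) := by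
      rw [continuous_def]
      intro U hU
      rw [isOpen_prod_iff]
      intro p q hpq
      simp only [Set.mem_preimage] at hpq
      by_cases hc : eOp p.2 q.2 = none
      · refine ⟨Set.univ ×ˢ {p.2}, Set.univ ×ˢ {q.2},
          IsOpen.prod isOpen_univ (isOpen_discrete _),
          IsOpen.prod isOpen_univ (isOpen_discrete _), ⟨trivial, rfl⟩, ⟨trivial, rfl⟩, ?_⟩
        rintro ⟨p', q'⟩ ⟨⟨-, hp2⟩, ⟨-, hq2⟩⟩
        have h2 : (pOpL p' q').2 = none := by
          show eOp p'.2 q'.2 = none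
          rw [(hp2 : p'.2 = p.2), (hq2 : q'.2 = q.2)]
          exact hc
        show yOpL p' q' ∈ U
        have hval : yOpL p q = (none, none) := nuL_none hc
        rw [show yOpL p' q' = ((none, none) : Option ℕ × Option L) from nuL_none h2, ← hval]
        exact hpq
      · have hval : yOpL p q = pOpL p q := nuL_of_ne hc
        by_cases hone : p.1 = none ∨ q.1 = none
        · have hm : maxOp p.1 q.1 = none := by
            rcases hone with h | h
            · rw [h]; exact maxOp_none_left _
            · rw [h, maxOp_none_right]
          have hnoneU : ((none : Option ℕ), eOp p.2 q.2) ∈ U := by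
            have h3 : yOpL p q = ((none : Option ℕ), eOp p.2 q.2) := by
              rw [hval]
              exact Prod.ext hm rfl
            rwa [h3] at hpq
          have hslice : IsOpen {x : Option ℕ | (x, eOp p.2 q.2) ∈ U} :=
            hU.preimage (Continuous.prodMk_left _)
          have hsl : {n : ℕ | (some n, eOp p.2 q.2) ∈ U} ∈ (Filter.atTop : Filter ℕ) :=
            (nfTop_isOpen_iff _ _).mp hslice hnoneU
          obtain ⟨m₀, hm₀⟩ := Filter.mem_atTop_sets.mp hsl
          set W : Set (Option ℕ) := insert none (some '' Set.Ici m₀) with hWdef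
          set A : Set (Option ℕ) := if p.1 = none then W else {p.1} with hA
          set B : Set (Option ℕ) := if q.1 = none then W else {q.1} with hB
          have hAopen : IsOpen A := by
            rw [hA]; split
            · exact hW m₀
            · exact (nfTop_isOpen_iff _ _).mpr (fun h => absurd (Eq.symm h) (by assumption))
          have hBopen : IsOpen B := by
            rw [hB]; split
            · exact hW m₀
            · exact (nfTop_isOpen_iff _ _).mpr (fun h => absurd (Eq.symm h) (by assumption))
          have hpA : p.1 ∈ A := by
            rw [hA]; split
            · rename_i h; rw [h]; exact Set.mem_insert _ _
            · exact rfl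
          have hqB : q.1 ∈ B := by
            rw [hB]; split
            · rename_i h; rw [h]; exact Set.mem_insert _ _
            · exact rfl
          refine ⟨A ×ˢ {p.2}, B ×ˢ {q.2}, IsOpen.prod hAopen (isOpen_discrete _),
            IsOpen.prod hBopen (isOpen_discrete _), ⟨hpA, rfl⟩, ⟨hqB, rfl⟩, ?_⟩
          rintro ⟨p', q'⟩ ⟨⟨hpA', hp2⟩, ⟨hqB', hq2⟩⟩
          have hc' : (pOpL p' q').2 ≠ none := by
            show eOp p'.2 q'.2 ≠ none
            rw [(hp2 : p'.2 = p.2), (hq2 : q'.2 = q.2)]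
            exact hc
          show yOpL p' q' ∈ U
          have heq : yOpL p' q' = (maxOp p'.1 q'.1, eOp p.2 q.2) := by
            have h5 := nuL_of_ne hc'
            show nuL (pOpL p' q') = _
            rw [h5]
            refine Prod.ext rfl ?_
            show eOp p'.2 q'.2 = _
            rw [(hp2 : p'.2 = p.2), (hq2 : q'.2 = q.2)]
          rw [heq]
          have key : maxOp p'.1 q'.1 = none ∨ ∃ b, m₀ ≤ b ∧ maxOp p'.1 q'.1 = some b := by
            rcases hone with h | h
            · rw [maxOp_comm]
              refine hmax m₀ q'.1 p'.1 (hWprop m₀ p'.1 ?_)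
              have : A = W := by rw [hA, if_pos h]
              rwa [this] at hpA'
            · refine hmax m₀ p'.1 q'.1 (hWprop m₀ q'.1 ?_)
              have : B = W := by rw [hB, if_pos h]
              rwa [this] at hqB'
          rcases key with hk2 | ⟨b, hb, hk2⟩
          · rw [hk2]; exact hnoneU
          · rw [hk2]; exact hm₀ b hb
        · push_neg at hone
          refine ⟨{p.1} ×ˢ {p.2}, {q.1} ×ˢ {q.2},
            IsOpen.prod ((nfTop_isOpen_iff _ _).mpr
              (fun h => absurd (Eq.symm h) hone.1)) (isOpen_discrete _),
            IsOpen.prod ((nfTop_isOpen_iff _ _).mpr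
              (fun h => absurd (Eq.symm h) hone.2)) (isOpen_discrete _),
            ⟨rfl, rfl⟩, ⟨rfl, rfl⟩, ?_⟩
          rintro ⟨p', q'⟩ ⟨⟨hp1, hp2⟩, ⟨hq1, hq2⟩⟩
          have hp' : p' = p := Prod.ext hp1 hp2
          have hq' : q' = q := Prod.ext hq1 hq2
          show yOpL p' q' ∈ U
          rw [hp', hq']
          exact hpq
    -- Y as a topological semilattice
    let opY : ↥Ys → ↥Ys → ↥Ys := fun a b => ⟨yOpL a.1 b.1, hYc _ a.2 _ b.2⟩
    have hnuFix : ∀ p ∈ Ys, nuL p = p := by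
      intro p hp
      rcases (hYmem p).mp hp with rfl | rfl | ⟨n, hn, k, hk, rfl⟩
      · exact nuL_none rfl
      · exact nuL_of_ne (by simp)
      · exact nuL_of_ne (by simp)
    have htsY : IsTopSemilattice ↥Ys opY := by
      refine ⟨inferInstance, ?_, ?_, ?_, ?_⟩
      · intro a b; exact Subtype.ext (yOpL_comm a.1 b.1)
      · intro a; exact Subtype.ext ((yOpL_self a.1).trans (hnuFix a.1 a.2))
      · intro a b c; exact Subtype.ext (yOpL_assoc a.1 b.1 c.1)
      · exact Continuous.subtype_mk
          (hcontAmb.comp (continuous_subtype_val.prodMap continuous_subtype_val)) _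
    -- the embedding from the quotient
    have hmemY : ∀ a : EsetL Fs L, (a : Option ℕ × Option L) ∉ IsetL Fs κ →
        (a : Option ℕ × Option L) ∈ Ys := by
      intro a ha
      obtain ⟨n, hn, k, hk, hak⟩ := hform a ha
      exact (hYmem _).mpr (Or.inr (Or.inr ⟨n, hn, k, hk, hak⟩))
    let g : EsetL Fs L → ↥Ys := fun a =>
      if h : (a : Option ℕ × Option L) ∈ IsetL Fs κ then ⟨(none, none), hzY⟩
      else ⟨(a : Option ℕ × Option L), hmemY a h⟩
    have hg_pos : ∀ (a : EsetL Fs L) (h : (a : Option ℕ × Option L) ∈ IsetL Fs κ),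
        g a = ⟨(none, none), hzY⟩ := fun a h => dif_pos h
    have hg_neg : ∀ (a : EsetL Fs L) (h : (a : Option ℕ × Option L) ∉ IsetL Fs κ),
        g a = ⟨(a : Option ℕ × Option L), hmemY a h⟩ := fun a h => dif_neg h
    have hgwd : ∀ a b : EsetL Fs L, (reesSetoidL Fs κ).r a b → g a = g b := by
      intro a b hab
      have hab' : a = b ∨ ((a : Option ℕ × Option L) ∈ IsetL Fs κ ∧
          (b : Option ℕ × Option L) ∈ IsetL Fs κ) := hab
      rcases hab' with rfl | ⟨h1, h2⟩
      · rfl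
      · rw [hg_pos a h1, hg_pos b h2]
    let f : Quotient (reesSetoidL Fs κ) → ↥Ys := Quotient.lift g hgwd
    have hfhom : ∀ x y, f (opQ x y) = opY (f x) (f y) := by
      intro x y
      refine Quotient.inductionOn₂ x y fun a b => ?_
      show g (opE a b) = opY (g a) (g b)
      by_cases ha : (a : Option ℕ × Option L) ∈ IsetL Fs κ
      · rw [hg_pos _ (hIopL a b ha), hg_pos _ ha]
        exact Subtype.ext (hzL _).symm
      · by_cases hb : (b : Option ℕ × Option L) ∈ IsetL Fs κ
        · rw [hg_pos _ (hIopR a b hb), hg_pos _ hb]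
          refine Subtype.ext ?_
          show (none, none) = yOpL (g a).1 (none, none)
          exact (hzR _).symm
        · obtain ⟨n, hn, k, hk, hak⟩ := hform a ha
          obtain ⟨m, hm, k', hk', hbk⟩ := hform b hb
          by_cases hkk : (a : Option ℕ × Option L).2 = (b : Option ℕ × Option L).2
          · have hsnd : (pOpL (a : Option ℕ × Option L) b).2 ≠ none := by
              show eOp _ _ ≠ none
              rw [eOp, if_pos hkk, hak]
              simp
            have hnotI : ((opE a b : EsetL Fs L) : Option ℕ × Option L) ∉ IsetL Fs κ := by
              rintro (⟨-, h2⟩ | ⟨-, ⟨k'', hk'', h2⟩⟩)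
              · exact hsnd h2
              · have h3 : (pOpL (a : Option ℕ × Option L) b).2 = some k := by
                  show eOp _ _ = some k
                  rw [eOp, if_pos hkk, hak]
                have : k'' = k := Option.some_inj.mp (h2.trans h3)
                exact hk (this ▸ hk'')
            rw [hg_neg _ hnotI, hg_neg _ ha, hg_neg _ hb]
            refine Subtype.ext ?_
            show pOpL (a : Option ℕ × Option L) b = yOpL (a : Option ℕ × Option L) b
            exact (nuL_of_ne hsnd).symm
          · have hsnd : (pOpL (a : Option ℕ × Option L) b).2 = none := by
              show eOp _ _ = none
              rw [eOp, if_neg hkk]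
            have hin : ((opE a b : EsetL Fs L) : Option ℕ × Option L) ∈ IsetL Fs κ :=
              Or.inl ⟨trivial, hsnd⟩
            rw [hg_pos _ hin, hg_neg _ ha, hg_neg _ hb]
            refine Subtype.ext ?_
            show (none, none) = yOpL (a : Option ℕ × Option L) b
            exact (nuL_none hsnd).symm
    have hfinj : Function.Injective f := by
      intro x y
      refine Quotient.inductionOn₂ x y fun a b hab => ?_
      have hab' : g a = g b := hab
      by_cases ha : (a : Option ℕ × Option L) ∈ IsetL Fs κ <;>
        by_cases hb : (b : Option ℕ × Option L) ∈ IsetL Fs κ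
      · exact Quotient.sound (Or.inr ⟨ha, hb⟩)
      · exfalso
        rw [hg_pos _ ha, hg_neg _ hb] at hab'
        obtain ⟨m, hm, k', hk', hbk⟩ := hform b hb
        have h2x := Subtype.ext_iff.mp hab'
        have h2 : ((none, none) : Option ℕ × Option L) = (b : Option ℕ × Option L) := h2x
        rw [hbk] at h2
        exact Option.some_ne_none m (congrArg Prod.fst h2).symm
      · exfalso
        rw [hg_neg _ ha, hg_pos _ hb] at hab'
        obtain ⟨m, hm, k', hk', hak⟩ := hform a ha
        have h2x := Subtype.ext_iff.mp hab'
        have h2 : (a : Option ℕ × Option L) = ((none, none) : Option ℕ × Option L) := h2x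
        rw [hak] at h2
        exact Option.some_ne_none m (congrArg Prod.fst h2)
      · rw [hg_neg _ ha, hg_neg _ hb] at hab'
        have h2x := Subtype.ext_iff.mp hab'
        have h2 : (a : Option ℕ × Option L) = (b : Option ℕ × Option L) := h2x
        exact Quotient.sound (Or.inl (Subtype.ext h2))
    have hisog : ∀ a : EsetL Fs L, IsOpen ({g a} : Set ↥Ys) := by
      intro a
      by_cases ha : (a : Option ℕ × Option L) ∈ IsetL Fs κ
      · rw [hg_pos _ ha]
        have he : ({⟨(none, none), hzY⟩} : Set ↥Ys)
            = Subtype.val ⁻¹' (Set.univ ×ˢ ({none} : Set (Option L))) := by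
          ext y
          constructor
          · rintro rfl; exact ⟨trivial, rfl⟩
          · rintro ⟨-, h2⟩
            have h2' : (y : Option ℕ × Option L).2 = none := h2
            rcases (hYmem _).mp y.2 with hy | hy | ⟨n, hn, k, hk, hy⟩
            · exact Subtype.ext hy
            · rw [hy] at h2'; exact absurd h2' (by simp)
            · rw [hy] at h2'; exact absurd h2' (by simp)
        rw [he]
        exact (IsOpen.prod isOpen_univ (isOpen_discrete _)).preimage continuous_subtype_val
      · obtain ⟨n, hn, k, hk, hak⟩ := hform a ha
        rw [hg_neg _ ha]
        have he : ({⟨(a : Option ℕ × Option L), hmemY a ha⟩} : Set ↥Ys)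
            = Subtype.val ⁻¹' ({(a : Option ℕ × Option L)} : Set (Option ℕ × Option L)) := by
          ext y
          constructor
          · rintro rfl; exact rfl
          · intro h2
            exact Subtype.ext (h2 : (y : Option ℕ × Option L) = _)
        rw [he]
        refine IsOpen.preimage continuous_subtype_val ?_
        rw [hak, ← Set.singleton_prod_singleton]
        exact IsOpen.prod ((nfTop_isOpen_iff _ _).mpr (fun h => absurd h (by simp)))
          (isOpen_discrete _)
    have hfopen : IsOpenMap f := by
      intro V hV
      have he : f '' V = ⋃ x ∈ V, {f x} := by
        ext y
        simp [eq_comm]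
      rw [he]
      refine isOpen_biUnion fun x hx => ?_
      obtain ⟨a, rfl⟩ := Quotient.exists_rep x
      exact hisog a
    have hfcont : Continuous f := continuous_of_discreteTopology
    have hembf : Topology.IsEmbedding f :=
      (IsOpenEmbedding.of_continuous_injective_isOpenMap hfcont hfinj hfopen).toIsEmbedding
    -- lift everything to the right universe
    let opY' : ULift ↥Ys → ULift ↥Ys → ULift ↥Ys :=
      fun a b => ULift.up (opY a.down b.down)
    have htsY' : IsTopSemilattice (ULift ↥Ys) opY' := by
      refine ⟨?_, ?_, ?_, ?_, ?_⟩
      · exact (Homeomorph.ulift (X := ↥Ys)).isEmbedding.t2Space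
      · intro a b; exact congrArg ULift.up (htsY.comm _ _)
      · intro a
        show ULift.up (opY a.down a.down) = a
        rw [htsY.idem]
      · intro a b c; exact congrArg ULift.up (htsY.assoc _ _ _)
      · exact (Homeomorph.ulift (X := ↥Ys)).symm.continuous.comp
          (htsY.cont.comp ((Homeomorph.ulift.continuous).prodMap Homeomorph.ulift.continuous))
    let f' : Quotient (reesSetoidL Fs κ) → ULift ↥Ys := fun x => ULift.up (f x)
    have hembf' : Topology.IsEmbedding f' :=
      (Homeomorph.ulift (X := ↥Ys)).symm.isEmbedding.comp hembf
    have hhom' : ∀ a b, f' (opQ a b) = opY' (f' a) (f' b) :=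
      fun a b => congrArg ULift.up (hfhom a b)
    have hclosed' := hcomp _ opY' htsY' f' hembf' hhom'
    have hrange : Set.range f' = ULift.down ⁻¹' (Set.range f) := by
      ext y
      constructor
      · rintro ⟨x, rfl⟩; exact ⟨x, rfl⟩
      · rintro ⟨x, hx⟩
        exact ⟨x, by rw [show f' x = ULift.up (f x) from rfl, hx]⟩
    rw [hrange] at hclosed'
    have hclosedf : IsClosed (Set.range f) :=
      ((Homeomorph.ulift (X := ↥Ys)).isClosed_preimage).mp hclosed'
    -- derive the contradiction: (ℱ, k₀) is a limit of the range not in the range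
    have hninf : (⟨(none, some k₀), hinfY⟩ : ↥Ys) ∉ Set.range f := by
      rintro ⟨x, hx⟩
      obtain ⟨a, rfl⟩ := Quotient.exists_rep x
      have hx' : g a = ⟨(none, some k₀), hinfY⟩ := hx
      by_cases ha : (a : Option ℕ × Option L) ∈ IsetL Fs κ
      · rw [hg_pos _ ha] at hx'
        have h3x := Subtype.ext_iff.mp hx'
        have h3 : ((none, none) : Option ℕ × Option L) = ((none, some k₀) : Option ℕ × Option L) := h3x
        exact Option.some_ne_none k₀ (congrArg Prod.snd h3).symm
      · rw [hg_neg _ ha] at hx'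
        obtain ⟨n, hn, k, hk, hak⟩ := hform a ha
        have h3x := Subtype.ext_iff.mp hx'
        have h3 : (a : Option ℕ × Option L) = ((none, some k₀) : Option ℕ × Option L) := h3x
        rw [hak] at h3
        exact Option.some_ne_none n (congrArg Prod.fst h3)
    have hoc : IsOpen ((Set.range f)ᶜ) := hclosedf.isOpen_compl
    obtain ⟨O, hO, hOeq⟩ := isOpen_induced_iff.mp hoc
    have hinfO : ((none : Option ℕ), some k₀) ∈ O := by
      have h1 : (⟨(none, some k₀), hinfY⟩ : ↥Ys) ∈ (Set.range f)ᶜ := hninf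
      rw [← hOeq] at h1
      exact h1
    have hslice : IsOpen {x : Option ℕ | (x, some k₀) ∈ O} :=
      hO.preimage (Continuous.prodMk_left _)
    have hsl : {n : ℕ | (some n, some k₀) ∈ O} ∈ (Filter.atTop : Filter ℕ) :=
      (nfTop_isOpen_iff _ _).mp hslice hinfO
    obtain ⟨m₀, hm₀⟩ := Filter.mem_atTop_sets.mp hsl
    obtain ⟨n, hn⟩ := (hinf.diff (Set.finite_lt_nat m₀)).nonempty
    have hnF : n ∈ Fsᶜ := hn.1
    have hnm : m₀ ≤ n := not_lt.mp hn.2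
    have haE : ((some n, some k₀) : Option ℕ × Option L) ∈ EsetL Fs L :=
      Or.inr ⟨⟨n, hnF, rfl⟩, ⟨k₀, trivial, rfl⟩⟩
    have hanI : ((some n, some k₀) : Option ℕ × Option L) ∉ IsetL Fs κ := by
      rintro (⟨-, h2⟩ | ⟨-, ⟨k', hk', h2⟩⟩)
      · exact Option.some_ne_none k₀ h2
      · exact hk₀ ((Option.some_inj.mp h2) ▸ hk')
    have hmemrange : (⟨(some n, some k₀), hmemY ⟨_, haE⟩ hanI⟩ : ↥Ys) ∈ Set.range f :=
      ⟨Quotient.mk (reesSetoidL Fs κ) ⟨(some n, some k₀), haE⟩, hg_neg ⟨_, haE⟩ hanI⟩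
    have hnot : (⟨(some n, some k₀), hmemY ⟨_, haE⟩ hanI⟩ : ↥Ys) ∈ (Set.range f)ᶜ := by
      rw [← hOeq]
      exact hm₀ n hnm
    exact hnot hmemrange
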